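/- If S[i..j] is a SUPS of S for an interval [s,t], then [i,j] contains exactly one MUPS of S, and that MUPS has the same center as [i,j] (i.e., if [x,y] is the MUPS, then x+y = i+j). -/

import Mathlib

/-- `sub S i j` is the substring `S[i..j]`, 1-indexed and inclusive. -/
def sub (S : List Char) (i j : ℕ) : List Char := (S.drop (i-1)).take (j+1-i)

/-- A string is a palindrome if it equals its reversal. -/
def isPal (w : List Char) : Prop := w.reverse = w

/-- The set of (1-indexed) occurrence positions of `w` in `S`. -/
def occs (S w : List Char) : Finset ℕ :=
  (Finset.Icc 1 S.length).filter (fun p => sub S p (p + w.length - 1) = w)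

/-- `w` occurs exactly once in `S`. -/
def uniqueIn (S w : List Char) : Prop := (occs S w).card = 1

/-- `[i,j]` is (the interval of) a unique palindromic substring of `S`. -/
def UPS (S : List Char) (i j : ℕ) : Prop :=
  1 ≤ i ∧ i ≤ j ∧ j ≤ S.length ∧ isPal (sub S i j) ∧ uniqueIn S (sub S i j)

/-- `[i,j]` is a minimal unique palindromic substring of `S`. -/
def MUPS (S : List Char) (i j : ℕ) : Prop :=
  UPS S i j ∧ (j + 1 - i ≤ 2 ∨ 2 ≤ (occs S (sub S (i+1) (j-1))).card)

/-- `[i,j]` is a shortest unique palindromic substring of `S` for the query `[s,t]`. -/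
def SUPS (S : List Char) (s t i j : ℕ) : Prop :=
  UPS S i j ∧ i ≤ s ∧ s ≤ t ∧ t ≤ j ∧
    ∀ i' j', UPS S i' j' → i' ≤ s → t ≤ j' → j - i ≤ j' - i'

/-- Reversal of a middle chunk of a palindrome is the mirror chunk. -/
lemma rev_drop_take (l : List Char) (hl : l.reverse = l) (a b : ℕ)
    (hab : a + b ≤ l.length) :
    ((l.drop a).take b).reverse = (l.drop (l.length - a - b)).take b := by
  rw [List.reverse_take, List.reverse_drop, hl, List.length_drop, List.drop_take]
  have e1 : l.length - a - (l.length - a - b) = b := by omega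
  rw [e1]

lemma sub_length (S : List Char) {i j : ℕ} (hi : 1 ≤ i) (hj : j ≤ S.length) :
    (sub S i j).length = j + 1 - i := by
  simp only [sub, List.length_take, List.length_drop]
  omega

lemma sub_nest (S : List Char) {i x y j : ℕ} (hi : 1 ≤ i) (hx : i ≤ x) (hxy : x ≤ y)
    (hy : y ≤ j) :
    sub S x y = ((sub S i j).drop (x - i)).take (y + 1 - x) := by
  unfold sub
  rw [List.drop_take, List.drop_drop, List.take_take]
  have e1 : (y + 1 - x) ⊓ (j + 1 - i - (x - i)) = y + 1 - x := by omega
  have e2 : i - 1 + (x - i) = x - 1 := by omega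
  rw [e1, e2]

lemma occ_mem (S : List Char) {x y : ℕ} (hx : 1 ≤ x) (hxy : x ≤ y) (hy : y ≤ S.length) :
    x ∈ occs S (sub S x y) := by
  simp only [occs, Finset.mem_filter, Finset.mem_Icc]
  refine ⟨⟨hx, le_trans hxy hy⟩, ?_⟩
  rw [sub_length S hx hy]
  have e : x + (y + 1 - x) - 1 = y := by omega
  rw [e]

lemma occ_spec (S : List Char) {i j p : ℕ} (hi : 1 ≤ i) (hij : i ≤ j) (hj : j ≤ S.length)
    (hp : p ∈ occs S (sub S i j)) :
    1 ≤ p ∧ p + j - i ≤ S.length ∧ sub S p (p + j - i) = sub S i j := by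
  simp only [occs, Finset.mem_filter, Finset.mem_Icc] at hp
  obtain ⟨⟨hp1, hpS⟩, heq⟩ := hp
  rw [sub_length S hi hj] at heq
  have e : p + (j + 1 - i) - 1 = p + j - i := by omega
  rw [e] at heq
  refine ⟨hp1, ?_, heq⟩
  have hlen := congrArg List.length heq
  rw [sub_length S hi hj] at hlen
  simp only [sub, List.length_take, List.length_drop] at hlen
  omega

lemma occs_card_le (S : List Char) {i x y j : ℕ} (hi : 1 ≤ i) (hx : i ≤ x) (hxy : x ≤ y)
    (hy : y ≤ j) (hj : j ≤ S.length) :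
    (occs S (sub S i j)).card ≤ (occs S (sub S x y)).card := by
  apply Finset.card_le_card_of_injOn (fun p => p + (x - i))
  · intro p hp
    obtain ⟨hp1, hple, heq⟩ := occ_spec S hi (le_trans hx (le_trans hxy hy)) hj hp
    simp only [Finset.mem_coe, occs, Finset.mem_filter, Finset.mem_Icc]
    refine ⟨⟨by omega, by omega⟩, ?_⟩
    rw [sub_length S (le_trans hi hx) (le_trans hy hj)]
    have h1 := sub_nest S (i := i) (j := j) hi hx hxy hy
    have h2 := sub_nest S (i := p) (x := p + (x - i)) (y := p + (y - i)) (j := p + j - i)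
      hp1 (by omega) (by omega) (by omega)
    rw [heq] at h2
    have e1 : p + (x - i) - p = x - i := by omega
    have e2 : p + (y - i) + 1 - (p + (x - i)) = y + 1 - x := by omega
    rw [e1, e2, ← h1] at h2
    have e3 : p + (x - i) + (y + 1 - x) - 1 = p + (y - i) := by omega
    rw [e3]
    exact h2
  · intro a _ b _ hab
    simp only at hab
    omega

/-- Any unique palindromic substring contained in a UPS has the same center. -/
lemma center_eq (S : List Char) {i j x y : ℕ} (hij : UPS S i j) (hx : i ≤ x)
    (hxy : x ≤ y) (hy : y ≤ j) (hpal : isPal (sub S x y))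
    (huniq : uniqueIn S (sub S x y)) : x + y = i + j := by
  obtain ⟨hi1, hij', hjS, hpalij, _⟩ := hij
  have hw : (sub S i j).length = j + 1 - i := sub_length S hi1 hjS
  have h1 := sub_nest S (i := i) (j := j) hi1 hx hxy hy
  have h2 := sub_nest S (i := i) (x := i + j - y) (y := i + j - x) (j := j) hi1
    (by omega) (by omega) (by omega)
  have h3 := rev_drop_take (sub S i j) hpalij (x - i) (y + 1 - x) (by rw [hw]; omega)
  rw [hw, ← h1, hpal] at h3
  have e1 : i + j - y - i = j + 1 - i - (x - i) - (y + 1 - x) := by omega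
  have e2 : i + j - x + 1 - (i + j - y) = y + 1 - x := by omega
  rw [e1, e2, ← h3] at h2
  -- h2 : sub S (i+j-y) (i+j-x) = sub S x y
  have hmem1 : x ∈ occs S (sub S x y) := occ_mem S (by omega) hxy (by omega)
  have hmem2 : i + j - y ∈ occs S (sub S x y) := by
    simp only [occs, Finset.mem_filter, Finset.mem_Icc]
    refine ⟨⟨by omega, by omega⟩, ?_⟩
    rw [sub_length S (by omega) (by omega)]
    have e3 : i + j - y + (y + 1 - x) - 1 = i + j - x := by omega
    rw [e3]
    exact h2
  have hcard : (occs S (sub S x y)).card = 1 := huniq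
  obtain ⟨a, ha⟩ := Finset.card_eq_one.mp hcard
  rw [ha, Finset.mem_singleton] at hmem1 hmem2
  omega

lemma exists_mups (S : List Char) :
    ∀ n i j, j - i ≤ n → UPS S i j →
      ∃ x y, MUPS S x y ∧ i ≤ x ∧ y ≤ j ∧ x + y = i + j := by
  intro n
  induction n with
  | zero =>
    intro i j hn hups
    have hij : i ≤ j := hups.2.1
    exact ⟨i, j, ⟨hups, Or.inl (by omega)⟩, le_refl _, le_refl _, rfl⟩
  | succ n ih =>
    intro i j hn hups
    by_cases hsmall : j + 1 - i ≤ 2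
    · exact ⟨i, j, ⟨hups, Or.inl hsmall⟩, le_refl _, le_refl _, rfl⟩
    · obtain ⟨hi1, hij, hjS, hpal, huniq⟩ := hups
      have hj2 : i + 2 ≤ j := by omega
      by_cases hc : 2 ≤ (occs S (sub S (i+1) (j-1))).card
      · exact ⟨i, j, ⟨⟨hi1, hij, hjS, hpal, huniq⟩, Or.inr hc⟩, le_refl _, le_refl _, rfl⟩
      · have hmem : i + 1 ∈ occs S (sub S (i+1) (j-1)) :=
          occ_mem S (by omega) (by omega) (by omega)
        have hpos : 0 < (occs S (sub S (i+1) (j-1))).card :=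
          Finset.card_pos.mpr ⟨_, hmem⟩
        have hc1 : (occs S (sub S (i+1) (j-1))).card = 1 := by omega
        have hw : (sub S i j).length = j + 1 - i := sub_length S hi1 hjS
        have hsub := sub_nest S (i := i) (x := i+1) (y := j-1) (j := j) hi1
          (by omega) (by omega) (by omega)
        have e1 : i + 1 - i = 1 := by omega
        have e2 : j - 1 + 1 - (i + 1) = j - i - 1 := by omega
        rw [e1, e2] at hsub
        have h3 := rev_drop_take (sub S i j) hpal 1 (j - i - 1) (by rw [hw]; omega)
        rw [hw] at h3
        have e3 : j + 1 - i - 1 - (j - i - 1) = 1 := by omega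
        rw [e3, ← hsub] at h3
        have hupsInner : UPS S (i+1) (j-1) := ⟨by omega, by omega, by omega, h3, hc1⟩
        obtain ⟨x, y, hm, hx, hy, hxy⟩ := ih (i+1) (j-1) (by omega) hupsInner
        exact ⟨x, y, hm, by omega, by omega, by omega⟩

theorem stmt6 (S : List Char) (s t i j : ℕ) (h : SUPS S s t i j) :
    ∃ x y, MUPS S x y ∧ i ≤ x ∧ y ≤ j ∧ x + y = i + j ∧
      ∀ x' y', MUPS S x' y' → i ≤ x' → y' ≤ j → x' = x ∧ y' = y := by
  obtain ⟨hups, -, -, -, -⟩ := h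
  obtain ⟨x, y, hm, hx, hy, hxy⟩ := exists_mups S (j - i) i j le_rfl hups
  refine ⟨x, y, hm, hx, hy, hxy, ?_⟩
  intro x' y' hm' hx' hy'
  have hxy1 : x ≤ y := hm.1.2.1
  have hxy1' : x' ≤ y' := hm'.1.2.1
  have hc' : x' + y' = i + j :=
    center_eq S hups hx' hxy1' hy' hm'.1.2.2.2.1 hm'.1.2.2.2.2
  have hyS : y ≤ S.length := hm.1.2.2.1
  have hyS' : y' ≤ S.length := hm'.1.2.2.1
  by_cases hxx : x' = x
  · exact ⟨hxx, by omega⟩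
  · exfalso
    rcases lt_or_gt_of_ne hxx with hlt | hgt
    · -- x' < x : sub S x y sits strictly inside sub S x' y'
      have hbig : ¬ (y' + 1 - x' ≤ 2) := by omega
      have hc2 : 2 ≤ (occs S (sub S (x'+1) (y'-1))).card := hm'.2.resolve_left hbig
      have hle := occs_card_le S (i := x'+1) (x := x) (y := y) (j := y'-1)
        (by omega) (by omega) hxy1 (by omega) (by omega)
      have hu : (occs S (sub S x y)).card = 1 := hm.1.2.2.2.2
      omega
    · -- x < x' : sub S x' y' sits strictly inside sub S x y
      have hbig : ¬ (y + 1 - x ≤ 2) := by omega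
      have hc2 : 2 ≤ (occs S (sub S (x+1) (y-1))).card := hm.2.resolve_left hbig
      have hle := occs_card_le S (i := x+1) (x := x') (y := y') (j := y-1)
        (by omega) (by omega) hxy1' (by omega) (by omega)
      have hu : (occs S (sub S x' y')).card = 1 := hm'.1.2.2.2.2
      omega
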